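/- Let X be an integrable real random variable and α ∈ (0,1). Then inf_{ψ∈ℝ} ( -ψ + (1/α)·E[max(ψ - X, 0)] ) = -(1/α)·∫_0^α F_X^←(p) dp, i.e., the infimum of the Pflug–Rockafellar–Uryasev function equals the Expected Shortfall ES_α(X). -/

import Mathlib

open MeasureTheory ProbabilityTheory Set Filter Topology

namespace RU



set_option linter.unusedSectionVars false
variable (ν : Measure ℝ) [IsProbabilityMeasure ν]

lemma aux_ne {p : ℝ} (hp : p < 1) : {x | p ≤ cdf ν x}.Nonempty := by
  have h := (tendsto_cdf_atTop (μ := ν)).eventually (eventually_ge_nhds hp)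
  exact h.exists

lemma aux_bdd {p : ℝ} (hp : 0 < p) : BddBelow {x | p ≤ cdf ν x} := by
  obtain ⟨x₀, hx₀⟩ := ((tendsto_cdf_atBot (μ := ν)).eventually (eventually_lt_nhds hp)).exists
  refine ⟨x₀, fun y hy => ?_⟩
  by_contra h
  push_neg at h
  exact absurd (hy.trans (monotone_cdf ν h.le)) (not_le.2 hx₀)

lemma aux_mem {p : ℝ} (hp0 : 0 < p) (hp1 : p < 1) :
    p ≤ cdf ν (sInf {x | p ≤ cdf ν x}) := by
  set a := sInf {x | p ≤ cdf ν x} with ha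
  by_contra h
  push_neg at h
  have hev : ∀ᶠ x in 𝓝[≥] a, cdf ν x < p :=
    ((cdf ν).right_continuous a).eventually (eventually_lt_nhds h)
  obtain ⟨u, hu, hsub⟩ := mem_nhdsGE_iff_exists_Ico_subset.1 hev
  have hua : u ≤ a := by
    refine le_csInf (aux_ne ν hp1) fun y hy => ?_
    have hay : a ≤ y := csInf_le (aux_bdd ν hp0) hy
    by_contra hyu
    push_neg at hyu
    have : cdf ν y < p := hsub ⟨hay, hyu⟩
    exact absurd hy (not_le.2 this)
  exact absurd hu (not_lt.2 hua)

lemma aux_gal {p : ℝ} (hp0 : 0 < p) (hp1 : p < 1) (t : ℝ) :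
    sInf {x | p ≤ cdf ν x} ≤ t ↔ p ≤ cdf ν t :=
  ⟨fun h => (aux_mem ν hp0 hp1).trans (monotone_cdf ν h),
   fun h => csInf_le (aux_bdd ν hp0) h⟩

lemma aux_mono {p p' : ℝ} (hp0 : 0 < p) (hpp : p ≤ p') (hp1 : p' < 1) :
    sInf {x | p ≤ cdf ν x} ≤ sInf {x | p' ≤ cdf ν x} :=
  csInf_le_csInf (aux_bdd ν hp0) (aux_ne ν hp1) fun x hx => hpp.trans hx




lemma ofReal_max_zero (a : ℝ) : ENNReal.ofReal (max a 0) = ENNReal.ofReal a := by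
  rcases le_total a 0 with h | h
  · rw [max_eq_right h, ENNReal.ofReal_of_nonpos h]; simp
  · rw [max_eq_left h]

lemma keyA {Ω : Type*} [MeasurableSpace Ω] (μ : Measure Ω) [IsProbabilityMeasure μ]
    {X' : Ω → ℝ} (hX'm : Measurable X') (ψ : ℝ) :
    ∫⁻ ω, ENNReal.ofReal (max (ψ - X' ω) 0) ∂μ
      = ∫⁻ t in Iio ψ, μ {ω | X' ω ≤ t} := by
  set s : Set (Ω × ℝ) := {z | X' z.1 ≤ z.2 ∧ z.2 < ψ} with hs_def
  have hs : MeasurableSet s :=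
    (measurableSet_le (hX'm.comp measurable_fst) measurable_snd).inter
      (measurableSet_lt measurable_snd measurable_const)
  calc ∫⁻ ω, ENNReal.ofReal (max (ψ - X' ω) 0) ∂μ
      = ∫⁻ ω, volume (Prod.mk ω ⁻¹' s) ∂μ := by
        refine lintegral_congr fun ω => ?_
        have h : Prod.mk ω ⁻¹' s = Ico (X' ω) ψ := by
          ext t; simp [hs_def, Ico, mem_setOf_eq]
        rw [h, Real.volume_Ico, ofReal_max_zero]
    _ = (μ.prod volume) s := (Measure.prod_apply hs).symm
    _ = ∫⁻ t, μ ((fun ω => (ω, t)) ⁻¹' s) ∂volume := Measure.prod_apply_symm hs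
    _ = ∫⁻ t, (Iio ψ).indicator (fun t => μ {ω | X' ω ≤ t}) t ∂volume := by
        refine lintegral_congr fun t => ?_
        by_cases ht : t < ψ
        · rw [Set.indicator_of_mem (mem_Iio.2 ht)]
          congr 1
          ext ω; simp [hs_def, ht]
        · rw [Set.indicator_of_notMem (by simpa using ht)]
          have h : ((fun ω => (ω, t)) ⁻¹' s) = ∅ := by
            ext ω; simp [hs_def, ht]
          rw [h, measure_empty]
    _ = ∫⁻ t in Iio ψ, μ {ω | X' ω ≤ t} := lintegral_indicator measurableSet_Iio _

lemma keyB {g : ℝ → ℝ} (hg : Measurable g) {α : ℝ} (H : ℝ → ℝ)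
    (hslice : ∀ t, {p | g p ≤ t} ∩ Ioc 0 α = Ioc 0 (min α (H t))) (ψ : ℝ) :
    ∫⁻ p in Ioc 0 α, ENNReal.ofReal (max (ψ - g p) 0)
      = ∫⁻ t in Iio ψ, ENNReal.ofReal (min α (H t)) := by
  set μ' : Measure ℝ := volume.restrict (Ioc 0 α) with hμ'
  set s : Set (ℝ × ℝ) := {z | g z.1 ≤ z.2 ∧ z.2 < ψ} with hs_def
  have hs : MeasurableSet s :=
    (measurableSet_le (hg.comp measurable_fst) measurable_snd).inter
      (measurableSet_lt measurable_snd measurable_const)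
  calc ∫⁻ p, ENNReal.ofReal (max (ψ - g p) 0) ∂μ'
      = ∫⁻ p, volume (Prod.mk p ⁻¹' s) ∂μ' := by
        refine lintegral_congr fun p => ?_
        have h : Prod.mk p ⁻¹' s = Ico (g p) ψ := by
          ext t; simp [hs_def, Ico, mem_setOf_eq]
        rw [h, Real.volume_Ico, ofReal_max_zero]
    _ = (μ'.prod volume) s := (Measure.prod_apply hs).symm
    _ = ∫⁻ t, μ' ((fun p => (p, t)) ⁻¹' s) ∂volume := Measure.prod_apply_symm hs
    _ = ∫⁻ t, (Iio ψ).indicator (fun t => ENNReal.ofReal (min α (H t))) t ∂volume := by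
        refine lintegral_congr fun t => ?_
        by_cases ht : t < ψ
        · rw [Set.indicator_of_mem (mem_Iio.2 ht)]
          have hA : MeasurableSet ((fun p => (p, t)) ⁻¹' s) := hs.preimage (by fun_prop)
          have h2 : ((fun p => (p, t)) ⁻¹' s) = {p | g p ≤ t} := by
            ext p; simp [hs_def, ht]
          rw [hμ', Measure.restrict_apply hA, h2, hslice t, Real.volume_Ioc]
          simp
        · rw [Set.indicator_of_notMem (by simpa using ht)]
          have h : ((fun p => (p, t)) ⁻¹' s) = ∅ := by
            ext p; simp [hs_def, ht]
          rw [h, measure_empty]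
    _ = ∫⁻ t in Iio ψ, ENNReal.ofReal (min α (H t)) := lintegral_indicator measurableSet_Iio _

end RU

open MeasureTheory ProbabilityTheory Set Filter Topology in
/-- The infimum of the Pflug–Rockafellar–Uryasev function equals the
Expected Shortfall ES_α(X) = -(1/α)∫_0^α F_X^←(p) dp. -/
theorem stmt_3 {Ω : Type*} [MeasurableSpace Ω] (μ : Measure Ω) [IsProbabilityMeasure μ]
    (X : Ω → ℝ) (hX : Integrable X μ) (α : ℝ) (hα : α ∈ Set.Ioo (0 : ℝ) 1) :
    IsGLB (Set.range fun ψ : ℝ => -ψ + (1 / α) * ∫ ω, max (ψ - X ω) 0 ∂μ)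
      (-(1 / α) * ∫ p in (0 : ℝ)..α, sInf {x | p ≤ (μ {ω | X ω ≤ x}).toReal}) := by
  obtain ⟨hα0, hα1⟩ := hα
  have hαne : α ≠ 0 := ne_of_gt hα0
  obtain ⟨X', hX'm, hXX'⟩ : ∃ X' : Ω → ℝ, Measurable X' ∧ X =ᵐ[μ] X' :=
    ⟨hX.1.aemeasurable.mk X, hX.1.aemeasurable.measurable_mk, hX.1.aemeasurable.ae_eq_mk⟩
  have hX'int : Integrable X' μ := hX.congr hXX'
  set ν : Measure ℝ := μ.map X' with hν
  haveI : IsProbabilityMeasure ν := Measure.isProbabilityMeasure_map hX'm.aemeasurable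
  have hνIic : ∀ x, ν (Iic x) = μ {ω | X' ω ≤ x} := fun x => by
    rw [hν, Measure.map_apply hX'm measurableSet_Iic]; rfl
  have hFeq : ∀ x, (μ {ω | X ω ≤ x}).toReal = cdf ν x := fun x => by
    have h1 : μ {ω | X ω ≤ x} = μ {ω | X' ω ≤ x} :=
      measure_congr (hXX'.mono fun ω h => by change (X ω ≤ x) = (X' ω ≤ x); rw [h])
    rw [h1, cdf_eq_real, measureReal_def, hνIic]
  set q : ℝ → ℝ := fun p => sInf {x | p ≤ cdf ν x} with hq
  have hset : ∀ p : ℝ, {x | p ≤ (μ {ω | X ω ≤ x}).toReal} = {x | p ≤ cdf ν x} := fun p => by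
    ext x; rw [mem_setOf_eq, mem_setOf_eq, hFeq]
  have hqmono : ∀ {p p' : ℝ}, 0 < p → p ≤ p' → p' < 1 → q p ≤ q p' :=
    fun h1 h2 h3 => RU.aux_mono ν h1 h2 h3
  have hgal : ∀ {p : ℝ}, 0 < p → p < 1 → ∀ t, (q p ≤ t ↔ p ≤ cdf ν t) :=
    fun h1 h2 t => RU.aux_gal ν h1 h2 t
  set ψ₀ : ℝ := q α with hψ₀def
  -- measurable modification of q on Ioc 0 α
  set g : ℝ → ℝ := fun p => if p ∈ Ioc (0:ℝ) α then q p else 0 with hg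
  have hq_on : ∀ p ∈ Ioc (0:ℝ) α, g p = q p := fun p hp => by rw [hg]; simp [hp]
  have hslice : ∀ t, {p | g p ≤ t} ∩ Ioc 0 α = Ioc 0 (min α (cdf ν t)) := fun t => by
    ext p
    constructor
    · rintro ⟨hp1, hp2⟩
      have hq_le : q p ≤ t := by rw [← hq_on p hp2]; exact hp1
      have hpF : p ≤ cdf ν t := (hgal hp2.1 (lt_of_le_of_lt hp2.2 hα1) t).1 hq_le
      exact ⟨hp2.1, le_min hp2.2 hpF⟩
    · rintro ⟨hp0, hp⟩
      have hpα : p ≤ α := hp.trans (min_le_left _ _)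
      have hpF : p ≤ cdf ν t := hp.trans (min_le_right _ _)
      have hmem : p ∈ Ioc (0:ℝ) α := ⟨hp0, hpα⟩
      refine ⟨?_, hmem⟩
      show g p ≤ t
      rw [hq_on p hmem]
      exact (hgal hp0 (lt_of_le_of_lt hpα hα1) t).2 hpF
  have hgmeas : Measurable g := by
    apply measurable_of_Iic
    intro t
    have hdec : g ⁻¹' Iic t
        = ({p | g p ≤ t} ∩ Ioc 0 α) ∪ (if (0:ℝ) ≤ t then (Ioc (0:ℝ) α)ᶜ else ∅) := by
      ext p
      by_cases hp : p ∈ Ioc (0:ℝ) α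
      · split_ifs with ht <;> simp [mem_preimage, mem_Iic, hp]
      · have h0 : g p = 0 := by rw [hg]; simp [hp]
        split_ifs with ht <;> simp [mem_preimage, mem_Iic, hp, h0, ht]
    rw [hdec, hslice t]
    refine measurableSet_Ioc.union ?_
    split_ifs
    · exact measurableSet_Ioc.compl
    · exact MeasurableSet.empty
  have hμ'aux : ∀ s : Set ℝ, (volume.restrict (Ioc (0:ℝ) α)) s ≤ ENNReal.ofReal α := by
    intro s
    calc (volume.restrict (Ioc (0:ℝ) α)) s ≤ (volume.restrict (Ioc (0:ℝ) α)) univ :=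
          measure_mono (subset_univ s)
      _ = ENNReal.ofReal α := by
          rw [Measure.restrict_apply_univ, Real.volume_Ioc, sub_zero]
  -- the two key identities
  have hAeq : ∀ ψ, ∫⁻ ω, ENNReal.ofReal (max (ψ - X' ω) 0) ∂μ
      = ∫⁻ t in Iio ψ, ENNReal.ofReal (cdf ν t) := fun ψ => by
    rw [RU.keyA μ hX'm ψ]
    refine setLIntegral_congr_fun_ae measurableSet_Iio (ae_of_all _ fun t _ => ?_)
    rw [← hνIic t, ← ofReal_cdf]
  have hB : ∀ ψ, (∫⁻ p in Ioc (0:ℝ) α, ENNReal.ofReal (max (ψ - q p) 0))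
      = ∫⁻ t in Iio ψ, ENNReal.ofReal (min α (cdf ν t)) := fun ψ => by
    rw [← RU.keyB hgmeas (fun t => cdf ν t) hslice ψ]
    refine setLIntegral_congr_fun_ae measurableSet_Ioc (ae_of_all _ fun p hp => ?_)
    rw [hq_on p hp]
  have hmax_int : ∀ ψ : ℝ, Integrable (fun ω => max (ψ - X' ω) 0) μ := fun ψ =>
    ((integrable_const ψ).sub hX'int).pos_part
  have hA_fin : ∀ ψ, (∫⁻ t in Iio ψ, ENNReal.ofReal (cdf ν t)) < ⊤ := fun ψ => by
    rw [← hAeq ψ]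
    calc ∫⁻ ω, ENNReal.ofReal (max (ψ - X' ω) 0) ∂μ
        = ∫⁻ ω, (‖max (ψ - X' ω) 0‖₊ : ENNReal) ∂μ := by
          refine lintegral_congr fun ω => ?_
          rw [← enorm_eq_nnnorm, Real.enorm_eq_ofReal (le_max_right _ _)]
      _ < ⊤ := (hmax_int ψ).2
  have hBleA : ∀ ψ, (∫⁻ t in Iio ψ, ENNReal.ofReal (min α (cdf ν t)))
      ≤ ∫⁻ t in Iio ψ, ENNReal.ofReal (cdf ν t) := fun ψ =>
    lintegral_mono fun t => ENNReal.ofReal_le_ofReal (min_le_right _ _)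
  -- real conversions
  have hIA : ∀ ψ, ∫ ω, max (ψ - X ω) 0 ∂μ
      = (∫⁻ t in Iio ψ, ENNReal.ofReal (cdf ν t)).toReal := fun ψ => by
    have h0 : ∫ ω, max (ψ - X ω) 0 ∂μ = ∫ ω, max (ψ - X' ω) 0 ∂μ :=
      integral_congr_ae (hXX'.mono fun ω h => by change max (ψ - X ω) 0 = _; rw [h])
    have h1 := integral_eq_lintegral_of_nonneg_ae (μ := μ) (f := fun ω => max (ψ - X' ω) 0)
      (ae_of_all _ fun ω => le_max_right _ _) (hmax_int ψ).1
    rw [h0, h1, hAeq ψ]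
  have hqaem : AEStronglyMeasurable q (volume.restrict (Ioc (0:ℝ) α)) :=
    hgmeas.aestronglyMeasurable.congr
      ((ae_restrict_iff' measurableSet_Ioc).2 (ae_of_all _ fun p hp => hq_on p hp))
  have hmaxq_aesm : ∀ ψ : ℝ, AEStronglyMeasurable (fun p => max (ψ - q p) 0)
      (volume.restrict (Ioc (0:ℝ) α)) := fun ψ =>
    (aestronglyMeasurable_const.sub hqaem).sup aestronglyMeasurable_const
  have hIB : ∀ ψ, (∫ p in Ioc (0:ℝ) α, max (ψ - q p) 0)
      = (∫⁻ t in Iio ψ, ENNReal.ofReal (min α (cdf ν t))).toReal := fun ψ => by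
    have h1 := integral_eq_lintegral_of_nonneg_ae (μ := volume.restrict (Ioc (0:ℝ) α))
      (f := fun p => max (ψ - q p) 0) (ae_of_all _ fun p => le_max_right _ _) (hmaxq_aesm ψ)
    rw [h1, hB ψ]
  have hmaxq_int : ∀ ψ : ℝ, Integrable (fun p => max (ψ - q p) 0)
      (volume.restrict (Ioc (0:ℝ) α)) := fun ψ => by
    refine ⟨hmaxq_aesm ψ, ?_⟩
    refine (hasFiniteIntegral_iff_ofReal (μ := volume.restrict (Ioc (0:ℝ) α))
      (f := fun p => max (ψ - q p) 0) (ae_of_all _ fun p => le_max_right _ _)).2 ?_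
    calc (∫⁻ p in Ioc (0:ℝ) α, ENNReal.ofReal (max (ψ - q p) 0))
        = ∫⁻ t in Iio ψ, ENNReal.ofReal (min α (cdf ν t)) := hB ψ
      _ ≤ ∫⁻ t in Iio ψ, ENNReal.ofReal (cdf ν t) := hBleA ψ
      _ < ⊤ := hA_fin ψ
  have hqle : ∀ p ∈ Ioc (0:ℝ) α, q p ≤ ψ₀ := fun p hp => hqmono hp.1 hp.2 hα1
  have hsub_eq : (fun p => max (ψ₀ - q p) 0) =ᵐ[volume.restrict (Ioc (0:ℝ) α)]
      (fun p => ψ₀ - q p) :=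
    (ae_restrict_iff' measurableSet_Ioc).2
      (ae_of_all _ fun p hp => max_eq_left (sub_nonneg.2 (hqle p hp)))
  have hqsub_int : Integrable (fun p => ψ₀ - q p) (volume.restrict (Ioc (0:ℝ) α)) :=
    (hmaxq_int ψ₀).congr hsub_eq
  have hqint : Integrable q (volume.restrict (Ioc (0:ℝ) α)) := by
    have h := (integrable_const ψ₀).sub hqsub_int
    have h2 : ((fun _ : ℝ => ψ₀) - fun p => ψ₀ - q p) = q := by funext p; simp
    rwa [h2] at h
  set J : ℝ := ∫ p in Ioc (0:ℝ) α, q p with hJ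
  have hsubint_val : ∀ ψ : ℝ, (∫ p in Ioc (0:ℝ) α, (ψ - q p)) = ψ * α - J := fun ψ => by
    rw [integral_sub (integrable_const ψ) hqint, setIntegral_const, Real.volume_real_Ioc_of_le hα0.le,
      sub_zero, smul_eq_mul, mul_comm]
  -- lower bound
  have hlb : ∀ ψ : ℝ, ψ * α - J ≤ ∫ ω, max (ψ - X ω) 0 ∂μ := fun ψ => by
    have h1 : (∫ p in Ioc (0:ℝ) α, (ψ - q p)) ≤ ∫ p in Ioc (0:ℝ) α, max (ψ - q p) 0 :=
      integral_mono ((integrable_const ψ).sub hqint) (hmaxq_int ψ) fun p => le_max_left _ _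
    have h2 : (∫⁻ t in Iio ψ, ENNReal.ofReal (min α (cdf ν t))).toReal
        ≤ (∫⁻ t in Iio ψ, ENNReal.ofReal (cdf ν t)).toReal :=
      ENNReal.toReal_mono (hA_fin ψ).ne (hBleA ψ)
    rw [hIA ψ, ← hsubint_val ψ]
    calc (∫ p in Ioc (0:ℝ) α, (ψ - q p)) ≤ ∫ p in Ioc (0:ℝ) α, max (ψ - q p) 0 := h1
      _ = (∫⁻ t in Iio ψ, ENNReal.ofReal (min α (cdf ν t))).toReal := hIB ψ
      _ ≤ (∫⁻ t in Iio ψ, ENNReal.ofReal (cdf ν t)).toReal := h2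
  -- value attained at ψ₀
  have hBA₀ : (∫⁻ t in Iio ψ₀, ENNReal.ofReal (min α (cdf ν t)))
      = ∫⁻ t in Iio ψ₀, ENNReal.ofReal (cdf ν t) := by
    refine setLIntegral_congr_fun_ae measurableSet_Iio (ae_of_all _ fun t ht => ?_)
    have h1 : ¬ (α ≤ cdf ν t) := by
      intro hc
      exact absurd ((hgal hα0 hα1 t).2 hc) (not_le.2 ht)
    rw [min_eq_right (le_of_not_ge h1)]
  have hval₀ : ∫ ω, max (ψ₀ - X ω) 0 ∂μ = ψ₀ * α - J := by
    rw [hIA ψ₀, ← hBA₀, ← hIB ψ₀, ← hsubint_val ψ₀]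
    exact integral_congr_ae hsub_eq
  -- rewrite the goal
  have hgoal : (∫ p in (0:ℝ)..α, sInf {x | p ≤ (μ {ω | X ω ≤ x}).toReal}) = J := by
    simp only [hset]
    rw [intervalIntegral.integral_of_le hα0.le]
  rw [hgoal]
  constructor
  · rintro y ⟨ψ, rfl⟩
    have h := hlb ψ
    have e : (1/α) * (ψ * α - J) = ψ - (1/α) * J := by field_simp
    have h2 := mul_le_mul_of_nonneg_left h (le_of_lt (one_div_pos.2 hα0))
    rw [e] at h2
    show -(1/α) * J ≤ -ψ + (1/α) * ∫ ω, max (ψ - X ω) 0 ∂μ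
    linarith
  · intro b hb
    have h := hb ⟨ψ₀, rfl⟩
    have h' : b ≤ -ψ₀ + (1/α) * ∫ ω, max (ψ₀ - X ω) 0 ∂μ := h
    rw [hval₀] at h'
    have e : -ψ₀ + (1/α) * (ψ₀ * α - J) = -(1/α) * J := by field_simp; ring
    linarith [h', e]
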